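/- arXiv:2009.06521 — 6 statements merged into one kernel-verified Lean document; each statement's English description precedes it below -/
import Mathlib

section
/- Any weakly chained diagonally dominant (WCDD) matrix is nonsingular. -/
/-- Row `i` of `A` is strictly diagonally dominant (SDD). -/
def RowSDD {N : ℕ} (A : Matrix (Fin N) (Fin N) ℝ) (i : Fin N) : Prop :=
  ∑ j ∈ Finset.univ.erase i, |A i j| < |A i i|

/-- `A` is weakly diagonally dominant (WDD). -/
def IsWDD {N : ℕ} (A : Matrix (Fin N) (Fin N) ℝ) : Prop :=
  ∀ i, ∑ j ∈ Finset.univ.erase i, |A i j| ≤ |A i i|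

/-- There is a walk in the directed graph of `A` (an edge `(i,j)` iff `A i j ≠ 0`)
from row `i` to some SDD row. -/
def WalkToSDD {N : ℕ} (A : Matrix (Fin N) (Fin N) ℝ) (i : Fin N) : Prop :=
  ∃ (m : ℕ) (p : Fin (m + 1) → Fin N), p 0 = i ∧
    (∀ k : Fin m, A (p k.castSucc) (p k.succ) ≠ 0) ∧ RowSDD A (p (Fin.last m))

/-- `A` is weakly chained diagonally dominant (WCDD). -/
def IsWCDD {N : ℕ} (A : Matrix (Fin N) (Fin N) ℝ) : Prop :=
  IsWDD A ∧ ∀ i, WalkToSDD A i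

/-- Any weakly chained diagonally dominant matrix is nonsingular. -/
theorem wcdd_nonsingular {N : ℕ} (A : Matrix (Fin N) (Fin N) ℝ) (hA : IsWCDD A) :
    A.det ≠ 0 := by
  intro hdet
  obtain ⟨v, hv0, hv⟩ := (Matrix.exists_mulVec_eq_zero_iff).2 hdet
  obtain ⟨j0, hj0⟩ := Function.ne_iff.1 hv0
  have hNE : (Finset.univ : Finset (Fin N)).Nonempty := ⟨j0, Finset.mem_univ _⟩
  obtain ⟨i0, -, hi0⟩ := Finset.exists_max_image Finset.univ (fun j => |v j|) hNE
  set M : ℝ := |v i0| with hM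
  have hMmax : ∀ j, |v j| ≤ M := fun j => hi0 j (Finset.mem_univ j)
  have hMpos : 0 < M := lt_of_lt_of_le (abs_pos.2 hj0) (hMmax j0)
  -- main bound for any row of maximal absolute value
  have bound : ∀ i : Fin N, |v i| = M →
      |A i i| * M ≤ ∑ j ∈ Finset.univ.erase i, |A i j| * |v j| := by
    intro i hiM
    have h0 : ∑ j, A i j * v j = 0 := by
      have := congrFun hv i
      simpa [Matrix.mulVec, dotProduct] using this
    have hsplit : A i i * v i + ∑ j ∈ Finset.univ.erase i, A i j * v j = 0 := by
      rw [← h0, Finset.add_sum_erase Finset.univ (fun j => A i j * v j) (Finset.mem_univ i)]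
    have heq : A i i * v i = -∑ j ∈ Finset.univ.erase i, A i j * v j := by
      linarith
    calc |A i i| * M = |A i i * v i| := by rw [abs_mul, hiM]
      _ = |∑ j ∈ Finset.univ.erase i, A i j * v j| := by rw [heq, abs_neg]
      _ ≤ ∑ j ∈ Finset.univ.erase i, |A i j * v j| := Finset.abs_sum_le_sum_abs _ _
      _ = ∑ j ∈ Finset.univ.erase i, |A i j| * |v j| := by simp [abs_mul]
  -- maximality propagates along edges
  have key : ∀ i : Fin N, |v i| = M → ∀ j, A i j ≠ 0 → |v j| = M := by
    intro i hiM j hAij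
    rcases eq_or_ne j i with rfl | hji
    · exact hiM
    have hb := bound i hiM
    have hub : ∑ j ∈ Finset.univ.erase i, |A i j| * |v j| ≤
        ∑ j ∈ Finset.univ.erase i, |A i j| * M := by
      apply Finset.sum_le_sum
      intro k _
      exact mul_le_mul_of_nonneg_left (hMmax k) (abs_nonneg _)
    have hub2 : ∑ j ∈ Finset.univ.erase i, |A i j| * M ≤ |A i i| * M := by
      rw [← Finset.sum_mul]
      exact mul_le_mul_of_nonneg_right (hA.1 i) (le_of_lt hMpos)
    have hsum0 : ∑ k ∈ Finset.univ.erase i, |A i k| * (M - |v k|) = 0 := by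
      have : ∑ k ∈ Finset.univ.erase i, (|A i k| * M - |A i k| * |v k|) = 0 := by
        rw [Finset.sum_sub_distrib]
        linarith
      simpa [mul_sub] using this
    have hterm : |A i j| * (M - |v j|) = 0 := by
      have := (Finset.sum_eq_zero_iff_of_nonneg (fun k _ =>
        mul_nonneg (abs_nonneg _) (by linarith [hMmax k]))).1 hsum0 j
          (Finset.mem_erase.2 ⟨hji, Finset.mem_univ j⟩)
      exact this
    rcases mul_eq_zero.1 hterm with h | h
    · exact absurd (abs_eq_zero.1 h) hAij
    · linarith
  -- follow the walk from i0 to an SDD row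
  obtain ⟨m, p, hp0, hedge, hsdd⟩ := hA.2 i0
  have hchain : ∀ k : Fin (m + 1), |v (p k)| = M := by
    intro k
    induction k using Fin.induction with
    | zero => rw [hp0]
    | succ k ih => exact key _ ih _ (hedge k)
  -- contradiction at the SDD row
  set i := p (Fin.last m)
  have hiM : |v i| = M := hchain _
  have hb := bound i hiM
  have hub : ∑ j ∈ Finset.univ.erase i, |A i j| * |v j| ≤
      (∑ j ∈ Finset.univ.erase i, |A i j|) * M := by
    rw [Finset.sum_mul]
    exact Finset.sum_le_sum fun k _ =>
      mul_le_mul_of_nonneg_left (hMmax k) (abs_nonneg _)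
  have hlt : (∑ j ∈ Finset.univ.erase i, |A i j|) * M < |A i i| * M :=
    mul_lt_mul_of_pos_right hsdd hMpos
  linarith
end

section
/- Let Λ : [δ₋, δ*] → (0,∞) be C², with Λ' < 0 and ΛΛ'' < c(Λ')² for some constant 0 < c < 2. Then the function f(δ, d) := δ + U_γ^{-1}(Λ(δ)/Λ'(δ)) + d is strictly increasing in δ for each fixed d, where U_γ(x) = (1 − e^{−γx})/γ for γ > 0 and U₀ = Id. Consequently, for each d the equation f(δ, d) = 0 has at most one solution δ in [δ₋, δ*]. -/
/-- CARA utility `U_γ(x) = (1 - e^{-γx})/γ` for `γ > 0`, with `U₀ = Id`. -/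
noncomputable def Ugamma (γ x : ℝ) : ℝ :=
  if γ = 0 then x else (1 - Real.exp (-γ * x)) / γ

/-- Inverse of the CARA utility: `U_γ⁻¹(y) = -(1/γ) log(1 - γy)` for `γ > 0`,
with `U₀⁻¹ = Id`. -/
noncomputable def UgammaInv (γ y : ℝ) : ℝ :=
  if γ = 0 then y else -(1 / γ) * Real.log (1 - γ * y)

/-- Let `Λ : [δ₋, δ*] → (0,∞)` be C² with `Λ' < 0` and `ΛΛ'' < c (Λ')²` for some
`0 < c < 2`. Then `f(δ,d) = δ + U_γ⁻¹(Λ(δ)/Λ'(δ)) + d` is strictly increasing in `δ`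
for each fixed `d`; consequently `f(·,d) = 0` has at most one solution in `[δ₋, δ*]`. -/
theorem fixed_point_eq_unique_sol (γ c δm δs : ℝ) (hγ : 0 ≤ γ)
    (hc0 : 0 < c) (hc2 : c < 2) (hδ : δm < δs)
    (Λ : ℝ → ℝ) (hC2 : ContDiffOn ℝ 2 Λ (Set.Icc δm δs))
    (hpos : ∀ δ ∈ Set.Icc δm δs, 0 < Λ δ)
    (hder : ∀ δ ∈ Set.Icc δm δs, derivWithin Λ (Set.Icc δm δs) δ < 0)
    (hineq : ∀ δ ∈ Set.Icc δm δs,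
      Λ δ * derivWithin (derivWithin Λ (Set.Icc δm δs)) (Set.Icc δm δs) δ
        < c * (derivWithin Λ (Set.Icc δm δs) δ) ^ 2) :
    ∀ d : ℝ,
      StrictMonoOn
        (fun δ => δ + UgammaInv γ (Λ δ / derivWithin Λ (Set.Icc δm δs) δ) + d)
        (Set.Icc δm δs) ∧
      ∀ δ₁ ∈ Set.Icc δm δs, ∀ δ₂ ∈ Set.Icc δm δs,
        δ₁ + UgammaInv γ (Λ δ₁ / derivWithin Λ (Set.Icc δm δs) δ₁) + d = 0 →
        δ₂ + UgammaInv γ (Λ δ₂ / derivWithin Λ (Set.Icc δm δs) δ₂) + d = 0 →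
        δ₁ = δ₂ := by
  intro d
  set s := Set.Icc δm δs with hs_def
  have hu : UniqueDiffOn ℝ s := uniqueDiffOn_Icc hδ
  set Λ' := derivWithin Λ s with hΛ'def
  set Λ'' := derivWithin Λ' s with hΛ''def
  have hΛdiff : DifferentiableOn ℝ Λ s := hC2.differentiableOn (by norm_num)
  have hΛ'C1 : ContDiffOn ℝ 1 Λ' s := hC2.derivWithin hu (le_refl 2)
  have hΛ'diff : DifferentiableOn ℝ Λ' s := hΛ'C1.differentiableOn (by norm_num)
  have hΛ : ∀ δ ∈ s, HasDerivWithinAt Λ (Λ' δ) s δ :=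
    fun δ hδ' => (hΛdiff δ hδ').hasDerivWithinAt
  have hΛ' : ∀ δ ∈ s, HasDerivWithinAt Λ' (Λ'' δ) s δ :=
    fun δ hδ' => (hΛ'diff δ hδ').hasDerivWithinAt
  set φ : ℝ → ℝ := fun δ => Λ δ / Λ' δ with hφ_def
  set φ' : ℝ → ℝ := fun δ => (Λ' δ * Λ' δ - Λ δ * Λ'' δ) / (Λ' δ) ^ 2 with hφ'_def
  have hφ : ∀ δ ∈ s, HasDerivWithinAt φ (φ' δ) s δ := by
    intro δ hδ'
    exact (hΛ δ hδ').div (hΛ' δ hδ') (hder δ hδ').ne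
  have hφneg : ∀ δ ∈ s, φ δ < 0 := fun δ hδ' =>
    div_neg_of_pos_of_neg (hpos δ hδ') (hder δ hδ')
  have hφ'gt : ∀ δ ∈ s, 1 - c < φ' δ := by
    intro δ hδ'
    have h1 := hineq δ hδ'
    have h2 : (0:ℝ) < (Λ' δ) ^ 2 := pow_two_pos_of_ne_zero (hder δ hδ').ne
    rw [hφ'_def, lt_div_iff₀ h2]
    nlinarith
  -- the function g
  set g : ℝ → ℝ := fun δ => δ + UgammaInv γ (φ δ) + d with hg_def
  set g' : ℝ → ℝ := fun δ => 1 + φ' δ / (1 - γ * φ δ) with hg'_def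
  have hBpos : ∀ δ ∈ s, (1:ℝ) ≤ 1 - γ * φ δ := by
    intro δ hδ'
    nlinarith [hφneg δ hδ', hγ]
  have hgder : ∀ δ ∈ s, HasDerivWithinAt g (g' δ) s δ := by
    intro δ hδ'
    rcases eq_or_lt_of_le hγ with hγ0 | hγpos
    · have hγ0 : γ = 0 := hγ0.symm
      have : g = fun δ => δ + φ δ + d := by
        funext x; simp [hg_def, UgammaInv, hγ0]
      rw [this]
      have : g' δ = 1 + φ' δ := by simp [hg'_def, hγ0]
      rw [this]
      exact ((hasDerivWithinAt_id δ s).add (hφ δ hδ')).add_const d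
    · have hγne : γ ≠ 0 := hγpos.ne'
      have hge : g = fun x => x + (-(1 / γ) * Real.log (1 - γ * φ x)) + d := by
        funext x; simp [hg_def, UgammaInv, hγne]
      rw [hge]
      have hB : (0:ℝ) < 1 - γ * φ δ := lt_of_lt_of_le one_pos (hBpos δ hδ')
      have hinner : HasDerivWithinAt (fun x => 1 - γ * φ x) (-(γ * φ' δ)) s δ := by
        simpa using ((hφ δ hδ').const_mul γ).const_sub 1
      have hlog : HasDerivWithinAt (fun x => Real.log (1 - γ * φ x))
          (-(γ * φ' δ) / (1 - γ * φ δ)) s δ := hinner.log hB.ne'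
      have hmul := hlog.const_mul (-(1 / γ))
      have heq : -(1 / γ) * (-(γ * φ' δ) / (1 - γ * φ δ)) = φ' δ / (1 - γ * φ δ) := by
        field_simp
      have := ((hasDerivWithinAt_id δ s).add (heq ▸ hmul)).add_const d
      simpa [hg'_def] using this
  have hg'pos : ∀ δ ∈ s, 0 < g' δ := by
    intro δ hδ'
    have hB1 : (1:ℝ) ≤ 1 - γ * φ δ := hBpos δ hδ'
    have hB : (0:ℝ) < 1 - γ * φ δ := lt_of_lt_of_le one_pos hB1
    have hA : 1 - c < φ' δ := hφ'gt δ hδ'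
    have key : 0 < (1 - γ * φ δ) + φ' δ := by
      rcases le_or_gt 0 (φ' δ) with h | h
      · linarith
      · nlinarith
    have : g' δ = ((1 - γ * φ δ) + φ' δ) / (1 - γ * φ δ) := by
      rw [hg'_def]; field_simp
    rw [this]
    exact div_pos key hB
  have hmono : StrictMonoOn g s := by
    apply strictMonoOn_of_hasDerivWithinAt_pos (convex_Icc δm δs)
    · exact fun δ hδ' => (hgder δ hδ').continuousWithinAt
    · intro x hx
      exact (hgder x (interior_subset hx)).mono interior_subset
    · exact fun x hx => hg'pos x (interior_subset hx)
  refine ⟨hmono, ?_⟩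
  intro δ₁ h1 δ₂ h2 e1 e2
  exact hmono.injOn h1 h2 (by rw [hg_def] at *; simp only at *; linarith)
end

section
/- Let Λ : ℝ → (0,∞) be continuous and decreasing with lim_{δ→+∞} δ·Λ(δ) = 0, and let h(δ, d) := Λ(δ)·(δ + d) for d ∈ ℝ. Then for each compact K ⊂ ℝ there exists a compact interval [a,b] ⊂ ℝ such that sup_{δ∈ℝ} h(δ, d) = max_{δ∈[a,b]} h(δ, d) for all d ∈ K. Moreover, H(d) := sup_{δ∈ℝ} h(δ, d) is locally Lipschitz on ℝ. -/
open Filter Set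

lemma aux_max (Λ : ℝ → ℝ) (hcont : Continuous Λ) (hanti : Antitone Λ)
    (hpos : ∀ δ, 0 < Λ δ)
    (hlim : Tendsto (fun δ => δ * Λ δ) atTop (nhds 0)) :
    ∀ K : Set ℝ, IsCompact K → ∃ a b : ℝ, a ≤ b ∧ ∀ d ∈ K,
      ∃ δ₀ ∈ Set.Icc a b, ∀ δ : ℝ, Λ δ * (δ + d) ≤ Λ δ₀ * (δ₀ + d) := by
  intro K hK
  obtain ⟨r, hr⟩ := hK.isBounded.subset_closedBall 0
  set M : ℝ := max r 0 with hM
  have hM0 : 0 ≤ M := le_max_right _ _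
  have hKM : K ⊆ Icc (-M) M := by
    intro x hx
    have := hr hx
    rw [Metric.mem_closedBall, Real.dist_eq, sub_zero] at this
    have := abs_le.mp this
    constructor <;> simp only [hM] <;> [linarith [this.1, le_max_left r 0]; linarith [this.2, le_max_left r 0]]
  -- Λ tends to 0
  have hΛ0 : Tendsto Λ atTop (nhds 0) := by
    apply squeeze_zero' (Filter.Eventually.of_forall fun δ => (hpos δ).le)
    · filter_upwards [eventually_ge_atTop (1:ℝ)] with δ hδ
      calc Λ δ = 1 * Λ δ := (one_mul _).symm
        _ ≤ δ * Λ δ := by nlinarith [hpos δ]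
    · exact hlim
  have h2 : Tendsto (fun δ => (δ + M) * Λ δ) atTop (nhds 0) := by
    have := hlim.add (hΛ0.const_mul M)
    simp only [mul_zero, add_zero] at this
    exact this.congr (fun δ => by ring)
  have hc : 0 < Λ (1 + M) := hpos _
  have hev : ∀ᶠ δ in atTop, (δ + M) * Λ δ < Λ (1 + M) := h2.eventually_lt_const hc
  obtain ⟨b₀, hb₀⟩ := eventually_atTop.mp hev
  refine ⟨-M - 1, max b₀ (1 + M), by have := le_max_right b₀ (1+M); linarith, ?_⟩
  intro d hd
  obtain ⟨hd1, hd2⟩ := hKM hd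
  have hab : (-M - 1 : ℝ) ≤ max b₀ (1 + M) := by linarith [le_max_right b₀ (1+M)]
  obtain ⟨δ₀, hδ₀mem, hmax⟩ := isCompact_Icc.exists_isMaxOn (nonempty_Icc.mpr hab)
    ((hcont.mul (continuous_id.add continuous_const)).continuousOn
      (s := Icc (-M - 1) (max b₀ (1 + M))))
  have hstar_mem : (1 - d) ∈ Icc (-M - 1) (max b₀ (1 + M)) := by
    constructor
    · linarith
    · have := le_max_right b₀ (1 + M); linarith
  have hc_le : Λ (1 + M) ≤ Λ δ₀ * (δ₀ + d) := by
    have h1 : Λ (1 - d) * ((1 - d) + d) ≤ Λ δ₀ * (δ₀ + d) := hmax hstar_mem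
    have h2 : Λ (1 - d) * ((1 - d) + d) = Λ (1 - d) := by ring
    have h3 : Λ (1 + M) ≤ Λ (1 - d) := hanti (by linarith)
    linarith
  refine ⟨δ₀, hδ₀mem, fun δ => ?_⟩
  by_cases hmem : δ ∈ Icc (-M - 1) (max b₀ (1 + M))
  · exact hmax hmem
  · rw [mem_Icc, not_and_or] at hmem
    have key : Λ δ * (δ + d) < Λ (1 + M) := by
      rcases hmem with h | h
      · push_neg at h
        have hneg : δ + d < 0 := by linarith
        calc Λ δ * (δ + d) ≤ 0 := le_of_lt (mul_neg_of_pos_of_neg (hpos δ) hneg)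
          _ < Λ (1 + M) := hc
      · push_neg at h
        have hδb₀ : b₀ ≤ δ := le_of_lt (lt_of_le_of_lt (le_max_left _ _) h)
        have := hb₀ δ hδb₀
        calc Λ δ * (δ + d) ≤ Λ δ * (δ + M) :=
              mul_le_mul_of_nonneg_left (by linarith) (hpos δ).le
          _ = (δ + M) * Λ δ := by ring
          _ < Λ (1 + M) := this
    linarith

/-- Let `Λ : ℝ → (0,∞)` be continuous, decreasing, with `δ·Λ(δ) → 0` as `δ → +∞`,
and `h(δ,d) = Λ(δ)(δ+d)`. Then for each compact `K` there is a compact interval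
`[a,b]` on which the supremum over `ℝ` of `h(·,d)` is attained for all `d ∈ K`;
moreover `H(d) = sup_δ h(δ,d)` is locally Lipschitz. -/
theorem hamiltonian_max_and_locally_lipschitz
    (Λ : ℝ → ℝ) (hcont : Continuous Λ) (hanti : Antitone Λ)
    (hpos : ∀ δ, 0 < Λ δ)
    (hlim : Filter.Tendsto (fun δ => δ * Λ δ) Filter.atTop (nhds 0)) :
    (∀ K : Set ℝ, IsCompact K → ∃ a b : ℝ, a ≤ b ∧ ∀ d ∈ K,
      ∃ δ₀ ∈ Set.Icc a b, ∀ δ : ℝ, Λ δ * (δ + d) ≤ Λ δ₀ * (δ₀ + d)) ∧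
    LocallyLipschitz (fun d => ⨆ δ : ℝ, Λ δ * (δ + d)) := by
  refine ⟨aux_max Λ hcont hanti hpos hlim, ?_⟩
  intro x
  obtain ⟨a, b, hab, hmax⟩ := aux_max Λ hcont hanti hpos hlim
    (Icc (x - 1) (x + 1)) isCompact_Icc
  refine ⟨(Λ a).toNNReal, Icc (x - 1) (x + 1),
    Icc_mem_nhds (by linarith) (by linarith), ?_⟩
  -- exact value of the sup on the window
  have hval : ∀ d ∈ Icc (x - 1) (x + 1), ∃ δ₀ ∈ Icc a b,
      (⨆ δ : ℝ, Λ δ * (δ + d)) = Λ δ₀ * (δ₀ + d) ∧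
      BddAbove (Set.range fun δ => Λ δ * (δ + d)) := by
    intro d hd
    obtain ⟨δ₀, hδ₀, hle⟩ := hmax d hd
    have hbdd : BddAbove (Set.range fun δ => Λ δ * (δ + d)) :=
      ⟨Λ δ₀ * (δ₀ + d), by rintro _ ⟨δ, rfl⟩; exact hle δ⟩
    exact ⟨δ₀, hδ₀, le_antisymm (ciSup_le hle) (le_ciSup hbdd δ₀), hbdd⟩
  apply LipschitzOnWith.of_dist_le_mul
  intro d hd d' hd'
  obtain ⟨δ₀, hδ₀, hval0, hbdd0⟩ := hval d hd
  obtain ⟨δ₁, hδ₁, hval1, hbdd1⟩ := hval d' hd'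
  rw [Real.dist_eq, Real.dist_eq]
  have hcoe : ((Λ a).toNNReal : ℝ) = Λ a := Real.coe_toNNReal _ (hpos a).le
  rw [hcoe]
  have key : ∀ (u v : ℝ) (δu δv : ℝ), δu ∈ Icc a b →
      (⨆ δ : ℝ, Λ δ * (δ + u)) = Λ δu * (δu + u) →
      BddAbove (Set.range fun δ => Λ δ * (δ + v)) →
      δu ∈ Icc a b →
      (⨆ δ : ℝ, Λ δ * (δ + u)) - (⨆ δ : ℝ, Λ δ * (δ + v)) ≤ Λ a * |u - v| := by
    intro u v δu δv hδu hequ hbddv _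
    have h1 : (⨆ δ : ℝ, Λ δ * (δ + u)) - (⨆ δ : ℝ, Λ δ * (δ + v))
        ≤ Λ δu * (δu + u) - Λ δu * (δu + v) := by
      rw [hequ]
      exact sub_le_sub_left (le_ciSup hbddv δu) _
    have h2 : Λ δu * (δu + u) - Λ δu * (δu + v) = Λ δu * (u - v) := by ring
    have h3 : Λ δu * (u - v) ≤ Λ δu * |u - v| :=
      mul_le_mul_of_nonneg_left (le_abs_self _) (hpos δu).le
    have h4 : Λ δu ≤ Λ a := hanti hδu.1
    nlinarith [abs_nonneg (u - v), hpos δu]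
  have d1 := key d d' δ₀ δ₁ hδ₀ hval0 hbdd1 hδ₀
  have d2 := key d' d δ₁ δ₀ hδ₁ hval1 hbdd0 hδ₁
  rw [abs_sub_comm d' d] at d2
  exact abs_sub_le_iff.mpr ⟨d1, d2⟩
end

section
/- Comparison principle for the market-making HJB system of ODEs: let I ⊆ [0,T] be an interval containing T, and let θ̄, θ̲ : I × ℐ → ℝ be C¹ in time, where ℐ = (ℤ ∩ [−N*, N*]) × {1,…,k} with N* < ∞. Suppose θ̄ is a supersolution and θ̲ a subsolution of the terminal-value system 0 = θ_t(t,n,i) + μn − ½σ²n²(ζ+γ) + Σ_{j≠i} q_t^{ij} U_γ(θ(t,n,j) − θ(t,n,i)) + 1_{n<N*} H_i^−(θ(t,n+1,i) − θ(t,n,i)) + 1_{−n<N*} H_i^+(θ(t,n−1,i) − θ(t,n,i)), and θ̲(T,·,·) ≤ −ℓ ≤ θ̄(T,·,·). Then θ̲ ≤ θ̄ on I × ℐ. -/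
lemma ugamma_mono {γ : ℝ} (hγ : 0 ≤ γ) : Monotone (Ugamma γ) := by
  rcases eq_or_lt_of_le hγ with h | h
  · intro x y hxy; simp [Ugamma, ← h, hxy]
  · intro x y hxy
    simp only [Ugamma, h.ne', if_false]
    rw [div_le_div_iff_of_pos_right h]
    have : Real.exp (-γ * y) ≤ Real.exp (-γ * x) := Real.exp_le_exp.2 (by nlinarith)
    linarith

/-- Comparison principle for the market-making HJB system of ODEs: any classical
(C¹ in time) supersolution dominates any classical subsolution, given the terminal
ordering `θ̲(T,·,·) ≤ -ℓ ≤ θ̄(T,·,·)`. -/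
theorem comparison_principle
    (T μ σ ζ γ : ℝ) (hT : 0 < T) (hσ : 0 ≤ σ) (hζ : 0 ≤ ζ) (hγ : 0 ≤ γ)
    (Nstar k : ℕ)
    (q : ℝ → Fin k → Fin k → ℝ)
    (hqc : ∀ i j, ContinuousOn (fun t => q t i j) (Set.Icc 0 T))
    (hqnn : ∀ t : ℝ, ∀ i j : Fin k, i ≠ j → 0 ≤ q t i j)
    (hqsum : ∀ t : ℝ, ∀ i : Fin k, ∑ j, q t i j = 0)
    (Hm Hp : Fin k → ℝ → ℝ)
    (hHmMono : ∀ i, Monotone (Hm i)) (hHpMono : ∀ i, Monotone (Hp i))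
    (hHmLip : ∀ i, LocallyLipschitz (Hm i)) (hHpLip : ∀ i, LocallyLipschitz (Hp i))
    (ℓ : ℤ → ℝ) (hℓ : ∀ n, 0 ≤ ℓ n)
    (I : Set ℝ) (hIsub : I ⊆ Set.Icc 0 T) (hTI : T ∈ I) (hIconn : I.OrdConnected)
    (θu θl Du Dl : ℝ → ℤ → Fin k → ℝ)
    (hdu : ∀ (n : ℤ) (i : Fin k), |n| ≤ (Nstar : ℤ) → ∀ t ∈ I,
      HasDerivWithinAt (fun s => θu s n i) (Du t n i) I t)
    (hdl : ∀ (n : ℤ) (i : Fin k), |n| ≤ (Nstar : ℤ) → ∀ t ∈ I,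
      HasDerivWithinAt (fun s => θl s n i) (Dl t n i) I t)
    (hduc : ∀ (n : ℤ) (i : Fin k), |n| ≤ (Nstar : ℤ) →
      ContinuousOn (fun t => Du t n i) I)
    (hdlc : ∀ (n : ℤ) (i : Fin k), |n| ≤ (Nstar : ℤ) →
      ContinuousOn (fun t => Dl t n i) I)
    (hsuper : ∀ t ∈ I, ∀ (n : ℤ) (i : Fin k), |n| ≤ (Nstar : ℤ) →
      Du t n i + μ * (n : ℝ) - (1 / 2) * σ ^ 2 * (n : ℝ) ^ 2 * (ζ + γ)
        + ∑ j ∈ Finset.univ.erase i, q t i j * Ugamma γ (θu t n j - θu t n i)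
        + (if n < (Nstar : ℤ) then Hm i (θu t (n + 1) i - θu t n i) else 0)
        + (if -n < (Nstar : ℤ) then Hp i (θu t (n - 1) i - θu t n i) else 0) ≤ 0)
    (hsub : ∀ t ∈ I, ∀ (n : ℤ) (i : Fin k), |n| ≤ (Nstar : ℤ) →
      0 ≤ Dl t n i + μ * (n : ℝ) - (1 / 2) * σ ^ 2 * (n : ℝ) ^ 2 * (ζ + γ)
        + ∑ j ∈ Finset.univ.erase i, q t i j * Ugamma γ (θl t n j - θl t n i)
        + (if n < (Nstar : ℤ) then Hm i (θl t (n + 1) i - θl t n i) else 0)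
        + (if -n < (Nstar : ℤ) then Hp i (θl t (n - 1) i - θl t n i) else 0))
    (hterm : ∀ (n : ℤ) (i : Fin k), |n| ≤ (Nstar : ℤ) →
      θl T n i ≤ -ℓ n ∧ -ℓ n ≤ θu T n i) :
    ∀ t ∈ I, ∀ (n : ℤ) (i : Fin k), |n| ≤ (Nstar : ℤ) → θl t n i ≤ θu t n i := by
  intro t0 ht0 n0 i0 hn0
  have ht0Icc := hIsub ht0
  have ht0T : t0 ≤ T := ht0Icc.2
  have hJI : Set.Icc t0 T ⊆ I := hIconn.out ht0 hTI
  have key : ∀ ε : ℝ, 0 < ε → 0 ≤ θu t0 n0 i0 - θl t0 n0 i0 + ε * (T - t0) := by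
    intro ε hε
    classical
    set S : Finset (ℤ × Fin k) :=
      (Finset.Icc (-(Nstar : ℤ)) (Nstar : ℤ)) ×ˢ Finset.univ with hSdef
    have hmemS : ∀ p : ℤ × Fin k, p ∈ S ↔ |p.1| ≤ (Nstar : ℤ) := by
      intro p
      simp [hSdef, Finset.mem_product, Finset.mem_Icc, abs_le]
    have hSne : S.Nonempty := ⟨(n0, i0), (hmemS _).2 hn0⟩
    set ψ : ℝ → ℤ × Fin k → ℝ :=
      fun t p => θu t p.1 p.2 - θl t p.1 p.2 + ε * (T - t) with hψ
    have hψcont : ∀ p ∈ S, ContinuousOn (fun t => ψ t p) I := by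
      intro p hp
      have hp' := (hmemS p).1 hp
      intro t ht
      exact (((hdu p.1 p.2 hp' t ht).continuousWithinAt.sub
        (hdl p.1 p.2 hp' t ht).continuousWithinAt).add
        ((by fun_prop : Continuous fun t : ℝ => ε * (T - t)).continuousWithinAt))
    set g : ℝ → ℝ := fun t => S.inf' hSne (ψ t) with hg
    have hgcont : ContinuousOn g (Set.Icc t0 T) :=
      (ContinuousOn.finset_inf'_apply hSne (fun p hp => hψcont p hp)).mono hJI
    obtain ⟨ts, htsJ, htsmin⟩ :=
      isCompact_Icc.exists_isMinOn ⟨t0, Set.left_mem_Icc.2 ht0T⟩ hgcont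
    obtain ⟨pm, hpmS, hpm⟩ := S.exists_mem_eq_inf' hSne (ψ ts)
    have htsI : ts ∈ I := hJI htsJ
    have hpm' : |pm.1| ≤ (Nstar : ℤ) := (hmemS pm).1 hpmS
    have hspace : ∀ p ∈ S, ψ ts pm ≤ ψ ts p := by
      intro p hp
      exact hpm ▸ Finset.inf'_le _ hp
    have hmin' : ∀ (n : ℤ) (j : Fin k), |n| ≤ (Nstar : ℤ) →
        θu ts pm.1 pm.2 - θl ts pm.1 pm.2 ≤ θu ts n j - θl ts n j := by
      intro n j hn
      have := hspace (n, j) ((hmemS _).2 hn)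
      simp only [hψ] at this
      linarith
    by_cases hts : ts = T
    · -- minimum at terminal time
      have hterm' := hterm pm.1 pm.2 hpm'
      have h0 : 0 ≤ ψ T pm := by
        simp only [hψ, sub_self, mul_zero, add_zero]
        linarith [hterm'.1, hterm'.2]
      have h1 : g t0 ≤ ψ t0 (n0, i0) := Finset.inf'_le _ ((hmemS _).2 hn0)
      have h2 : g ts ≤ g t0 := htsmin (Set.left_mem_Icc.2 ht0T)
      have h3 : g ts = ψ T pm := by rw [hts] at hpm ⊢; exact hpm
      have h4 : ψ t0 (n0, i0) = θu t0 n0 i0 - θl t0 n0 i0 + ε * (T - t0) := rfl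
      linarith
    · -- interior minimum: contradiction
      exfalso
      have htsT : ts < T := lt_of_le_of_ne htsJ.2 hts
      have hJI2 : Set.Icc ts T ⊆ I := hIconn.out htsI hTI
      have hderiv : HasDerivWithinAt (fun t => ψ t pm)
          (Du ts pm.1 pm.2 - Dl ts pm.1 pm.2 + ε * (-1)) (Set.Icc ts T) ts := by
        have h1 := (hdu pm.1 pm.2 hpm' ts htsI).sub (hdl pm.1 pm.2 hpm' ts htsI)
        have h3 : HasDerivWithinAt (fun t : ℝ => T - t) (0 - 1) I ts :=
          (hasDerivWithinAt_const ts I T).sub (hasDerivWithinAt_id ts I)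
        have h2 : HasDerivWithinAt (fun t : ℝ => ε * (T - t)) (ε * (0 - 1)) I ts :=
          h3.const_mul ε
        have h2' : HasDerivWithinAt (fun t : ℝ => ε * (T - t)) (ε * (-1)) I ts := by
          convert h2 using 1; ring
        exact (h1.add h2').mono hJI2
      have hd0 : 0 ≤ Du ts pm.1 pm.2 - Dl ts pm.1 pm.2 + ε * (-1) := by
        rw [hasDerivWithinAt_iff_tendsto_slope] at hderiv
        have hIocs : Set.Icc ts T \ {ts} = Set.Ioc ts T := Set.Icc_diff_left
        haveI hnb : (nhdsWithin ts (Set.Icc ts T \ {ts})).NeBot := by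
          rw [hIocs]; exact left_nhdsWithin_Ioc_neBot htsT
        refine ge_of_tendsto hderiv ?_
        filter_upwards [self_mem_nhdsWithin] with t ht
        rw [hIocs] at ht
        have h1 : ψ ts pm ≤ ψ t pm := by
          calc ψ ts pm = g ts := hpm.symm
            _ ≤ g t := htsmin ⟨le_trans htsJ.1 ht.1.le, ht.2⟩
            _ ≤ ψ t pm := Finset.inf'_le _ hpmS
        have ht' : 0 < t - ts := sub_pos.2 ht.1
        rw [slope_def_field]
        exact div_nonneg (by linarith) ht'.le
      have hSu := hsuper ts htsI pm.1 pm.2 hpm'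
      have hSl := hsub ts htsI pm.1 pm.2 hpm'
      have hsum : ∑ j ∈ Finset.univ.erase pm.2,
            q ts pm.2 j * Ugamma γ (θl ts pm.1 j - θl ts pm.1 pm.2)
          ≤ ∑ j ∈ Finset.univ.erase pm.2,
            q ts pm.2 j * Ugamma γ (θu ts pm.1 j - θu ts pm.1 pm.2) := by
        refine Finset.sum_le_sum ?_
        intro j hj
        have hjne : j ≠ pm.2 := Finset.ne_of_mem_erase hj
        refine mul_le_mul_of_nonneg_left ?_ (hqnn ts pm.2 j (Ne.symm hjne))
        exact ugamma_mono hγ (by have := hmin' pm.1 j hpm'; linarith)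
      have hHmle : (if pm.1 < (Nstar : ℤ) then
            Hm pm.2 (θl ts (pm.1 + 1) pm.2 - θl ts pm.1 pm.2) else 0)
          ≤ (if pm.1 < (Nstar : ℤ) then
            Hm pm.2 (θu ts (pm.1 + 1) pm.2 - θu ts pm.1 pm.2) else 0) := by
        by_cases h : pm.1 < (Nstar : ℤ)
        · rw [if_pos h, if_pos h]
          have habs : |pm.1 + 1| ≤ (Nstar : ℤ) := by
            rw [abs_le] at hpm' ⊢; omega
          exact hHmMono pm.2 (by have := hmin' (pm.1 + 1) pm.2 habs; linarith)
        · rw [if_neg h, if_neg h]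
      have hHple : (if -pm.1 < (Nstar : ℤ) then
            Hp pm.2 (θl ts (pm.1 - 1) pm.2 - θl ts pm.1 pm.2) else 0)
          ≤ (if -pm.1 < (Nstar : ℤ) then
            Hp pm.2 (θu ts (pm.1 - 1) pm.2 - θu ts pm.1 pm.2) else 0) := by
        by_cases h : -pm.1 < (Nstar : ℤ)
        · rw [if_pos h, if_pos h]
          have habs : |pm.1 - 1| ≤ (Nstar : ℤ) := by
            rw [abs_le] at hpm' ⊢; omega
          exact hHpMono pm.2 (by have := hmin' (pm.1 - 1) pm.2 habs; linarith)
        · rw [if_neg h, if_neg h]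
      linarith
  by_contra hlt
  push_neg at hlt
  have hc : 0 ≤ T - t0 := sub_nonneg.2 ht0T
  have hx : θu t0 n0 i0 - θl t0 n0 i0 < 0 := by linarith
  have hεpos : 0 < -(θu t0 n0 i0 - θl t0 n0 i0) / (T - t0 + 1) :=
    div_pos (by linarith) (by linarith)
  have hkey := key _ hεpos
  have h1 : 0 < T - t0 + 1 := by linarith
  nlinarith [mul_nonneg hkey h1.le,
    div_mul_cancel₀ (-(θu t0 n0 i0 - θl t0 n0 i0)) h1.ne']
end

section
/- Positivity of the filter: let π : [t₀, t₁) → ℝ^k be absolutely continuous with π^i(t₀) > 0 for all i, satisfying (π^i)'(t) = Σ_j (q_t^{ji} π^j(t) + π^i(t) π^j(t) A_t^{ji}) for a.e. t, where q_t^{ji} ≥ 0 for j ≠ i, the functions t ↦ q_t^{ji} and t ↦ A_t^{ji} are bounded measurable, A^{ii} ≡ 0, and π^j(t) ≥ 0 for all j, t. Then π^i(t) > 0 for all t ∈ [t₀, t₁) and all i; in fact π^i(t) ≥ π^i(t₀) exp(∫_{t₀}^t (q_u^{ii} + Σ_{j≠i} π^j(u) A_u^{ji}) du). -/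
open intervalIntegral
open MeasureTheory Filter Set Metric

lemma bdd_meas_intervalIntegrable {f : ℝ → ℝ} (hf : Measurable f) {M : ℝ}
    (hM : ∀ u, |f u| ≤ M) (a b : ℝ) : IntervalIntegrable f volume a b := by
  apply IntervalIntegrable.mono_fun' (g := fun _ => M)
  · exact intervalIntegrable_const
  · exact hf.aestronglyMeasurable
  · exact Filter.Eventually.of_forall fun x => hM x

lemma ae_hasDerivAt_integral {f : ℝ → ℝ} (hf : Measurable f) {M : ℝ}
    (hM : ∀ u, |f u| ≤ M) (a : ℝ) :
    ∀ᵐ x, HasDerivAt (fun t => ∫ u in a..t, f u) (f x) x := by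
  have hint : ∀ p q : ℝ, IntervalIntegrable f volume p q :=
    bdd_meas_intervalIntegrable hf hM
  have hloc : LocallyIntegrable f volume := by
    intro x
    refine ⟨closedBall x 1, closedBall_mem_nhds x one_pos, ?_⟩
    have := (hint (x-1) (x+1)).1
    rw [Real.closedBall_eq_Icc]
    rwa [integrableOn_Icc_iff_integrableOn_Ioc]
  filter_upwards [IsUnifLocDoublingMeasure.ae_tendsto_average_norm_sub volume hloc 1] with x hx
  have hδ : Tendsto (fun y : ℝ => |y - x|) (nhdsWithin x {x}ᶜ) (nhdsWithin 0 (Ioi 0)) := by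
    rw [tendsto_nhdsWithin_iff]
    constructor
    · apply tendsto_nhdsWithin_of_tendsto_nhds
      have : Tendsto (fun y : ℝ => |y - x|) (nhds x) (nhds |x - x|) :=
        (continuous_abs.comp (continuous_id.sub continuous_const)).continuousAt
      simpa using this
    · filter_upwards [self_mem_nhdsWithin] with y hy
      exact abs_pos.2 (sub_ne_zero.2 hy)
  have hev : ∀ᶠ y : ℝ in nhdsWithin x {x}ᶜ, x ∈ closedBall x (1 * |y - x|) := by
    filter_upwards with y
    simp [abs_nonneg]
  have havg := hx (fun _ : ℝ => x) (fun y : ℝ => |y - x|) hδ hev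
  rw [hasDerivAt_iff_tendsto_slope]
  rw [tendsto_iff_dist_tendsto_zero]
  have key : ∀ᶠ y in nhdsWithin x {x}ᶜ,
      dist (slope (fun t => ∫ u in a..t, f u) x y) (f x)
        ≤ 2 * ⨍ u in closedBall x |y - x|, ‖f u - f x‖ := by
    filter_upwards [self_mem_nhdsWithin] with y hy
    have hyx : y ≠ x := hy
    have hr : (0:ℝ) < |y - x| := abs_pos.2 (sub_ne_zero.2 hyx)
    have hF : (∫ u in a..y, f u) - ∫ u in a..x, f u = ∫ u in x..y, f u :=
      integral_interval_sub_left (hint a y) (hint a x)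
    have e1 : (∫ u in x..y, f u) - f x * (y - x) = ∫ u in x..y, (f u - f x) := by
      rw [intervalIntegral.integral_sub (hint x y) intervalIntegrable_const,
        intervalIntegral.integral_const]
      simp [smul_eq_mul]; ring
    have hig : IntegrableOn (fun u => ‖f u - f x‖) (closedBall x |y - x|) volume := by
      exact ((hloc.integrableOn_isCompact (isCompact_closedBall x _)).sub
        (integrableOn_const measure_closedBall_lt_top.ne)).norm
    have hsub : Set.uIoc x y ⊆ closedBall x |y - x| := by
      intro u hu
      rw [Set.mem_uIoc] at hu
      rw [mem_closedBall, Real.dist_eq]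
      rcases hu with h | h
      · rw [abs_of_pos (by linarith [h.1, h.2] : (0:ℝ) < y - x), abs_of_pos (by linarith [h.1] : (0:ℝ) < u - x)]
        linarith [h.2]
      · rw [abs_of_neg (by linarith [h.1, h.2] : y - x < 0), abs_of_nonpos (by linarith [h.2] : u - x ≤ 0)]
        linarith [h.1]
    have e2 : ‖∫ u in x..y, (f u - f x)‖ ≤ ∫ u in closedBall x |y - x|, ‖f u - f x‖ := by
      refine norm_integral_le_integral_norm_uIoc.trans ?_
      exact setIntegral_mono_set hig (Filter.Eventually.of_forall fun u => norm_nonneg _)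
        (HasSubset.Subset.eventuallyLE hsub)
    have e3 : (∫ u in closedBall x |y - x|, ‖f u - f x‖)
        = (2 * |y - x|) * ⨍ u in closedBall x |y - x|, ‖f u - f x‖ := by
      rw [setAverage_eq]
      rw [Real.volume_real_closedBall (by linarith), smul_eq_mul,
        ← mul_assoc, mul_inv_cancel₀ (by linarith), one_mul]
    have hd : dist (slope (fun t => ∫ u in a..t, f u) x y) (f x)
        = ‖∫ u in x..y, (f u - f x)‖ / |y - x| := by
      rw [slope_def_field, hF, Real.dist_eq, Real.norm_eq_abs, ← abs_div]
      congr 1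
      rw [← e1, sub_div, mul_div_cancel_right₀ _ (sub_ne_zero.2 hyx)]
    rw [hd, div_le_iff₀ hr]
    calc ‖∫ u in x..y, (f u - f x)‖ ≤ _ := e2
      _ = _ := e3
      _ = _ := by ring
  have h2 : Tendsto (fun y => 2 * ⨍ u in closedBall x |y - x|, ‖f u - f x‖)
      (nhdsWithin x {x}ᶜ) (nhds 0) := by
    simpa using havg.const_mul 2
  exact squeeze_zero' (Filter.Eventually.of_forall fun y => dist_nonneg) key h2

lemma seq_tendsto_punct (c : ℝ) :
    Tendsto (fun n : ℕ => c + 1/((n:ℝ)+1)) atTop (nhdsWithin c {c}ᶜ) := by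
  rw [tendsto_nhdsWithin_iff]
  constructor
  · have h0 : Tendsto (fun n : ℕ => 1/((n:ℝ)+1)) atTop (nhds 0) :=
      tendsto_one_div_add_atTop_nhds_zero_nat
    simpa using (tendsto_const_nhds.add h0)
  · filter_upwards with n
    have : (0:ℝ) < 1/((n:ℝ)+1) := by positivity
    simp only [Set.mem_compl_iff, Set.mem_singleton_iff]
    intro h
    nlinarith [h]

lemma slope_seq_lim {f : ℝ → ℝ} {f' c : ℝ} (h : HasDerivAt f f' c) :
    Tendsto (fun n : ℕ => (f (c + 1/((n:ℝ)+1)) - f c) * ((n:ℝ)+1)) atTop (nhds f') := by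
  have hs := (hasDerivAt_iff_tendsto_slope.1 h).comp (seq_tendsto_punct c)
  convert hs using 2 with n
  have hn : ((n:ℝ)+1) ≠ 0 := by positivity
  rw [Function.comp_apply, slope_def_field, add_sub_cancel_left, one_div, div_eq_mul_inv, inv_inv]

lemma lipschitz_ftc {φ : ℝ → ℝ} {K : NNReal} (hφ : LipschitzWith K φ) (a b : ℝ)
    (hab : a ≤ b) : φ b - φ a = ∫ x in a..b, deriv φ x := by
  have hc : Continuous φ := hφ.continuous
  have hφint : ∀ p q : ℝ, IntervalIntegrable φ volume p q := fun p q =>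
    hc.intervalIntegrable p q
  set Fn : ℕ → ℝ → ℝ := fun n x => (φ (x + 1/((n:ℝ)+1)) - φ x) * ((n:ℝ)+1) with hFn
  -- Step A : value of ∫ Fn n
  have stepA : ∀ n : ℕ, ∫ x in a..b, Fn n x
      = (∫ t in b..(b + 1/((n:ℝ)+1)), φ t) * ((n:ℝ)+1)
        - (∫ t in a..(a + 1/((n:ℝ)+1)), φ t) * ((n:ℝ)+1) := by
    intro n
    set d : ℝ := 1/((n:ℝ)+1) with hd
    have hcomp : Continuous fun x => φ (x + d) := hc.comp (continuous_id.add continuous_const)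
    have h1 : ∫ x in a..b, Fn n x
        = ((∫ x in a..b, φ (x + d)) - ∫ x in a..b, φ x) * ((n:ℝ)+1) := by
      rw [← intervalIntegral.integral_sub (hcomp.intervalIntegrable a b) (hφint a b),
        ← intervalIntegral.integral_mul_const]
    have h2 : ∫ x in a..b, φ (x + d) = ∫ x in (a+d)..(b+d), φ x :=
      intervalIntegral.integral_comp_add_right φ d
    have h3 : (∫ x in (a+d)..b, φ x) + ∫ x in b..(b+d), φ x = ∫ x in (a+d)..(b+d), φ x :=
      intervalIntegral.integral_add_adjacent_intervals (hφint _ _) (hφint _ _)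
    have h4 : (∫ x in a..(a+d), φ x) + ∫ x in (a+d)..b, φ x = ∫ x in a..b, φ x :=
      intervalIntegral.integral_add_adjacent_intervals (hφint _ _) (hφint _ _)
    rw [h1, h2, ← h3, ← h4]
    ring
  -- Step B : limit of boundary terms
  have stepB : ∀ c : ℝ, Tendsto (fun n : ℕ => (∫ t in c..(c + 1/((n:ℝ)+1)), φ t) * ((n:ℝ)+1))
      atTop (nhds (φ c)) := by
    intro c
    have hD : HasDerivAt (fun u => ∫ t in c..u, φ t) (φ c) c :=
      intervalIntegral.integral_hasDerivAt_right (hφint c c)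
        (hc.stronglyMeasurableAtFilter _ _) hc.continuousAt
    have := slope_seq_lim hD
    simpa using this
  -- Step C : dominated convergence
  have hmeasd : ∀ᵐ x : ℝ, Tendsto (fun n => Fn n x) atTop (nhds (deriv φ x)) := by
    filter_upwards [hφ.ae_differentiableAt_real] with x hx
    exact slope_seq_lim hx.hasDerivAt
  have stepC : Tendsto (fun n => ∫ x in Ioc a b, Fn n x) atTop
      (nhds (∫ x in Ioc a b, deriv φ x)) := by
    apply MeasureTheory.tendsto_integral_of_dominated_convergence (fun _ => (K:ℝ))
    · intro n
      exact (((hc.comp (continuous_id.add continuous_const)).sub hc).mul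
        continuous_const).aestronglyMeasurable.restrict
    · exact integrableOn_const measure_Ioc_lt_top.ne
    · intro n
      filter_upwards with x
      have hdist := hφ.dist_le_mul (x + 1/((n:ℝ)+1)) x
      rw [Real.dist_eq, Real.dist_eq, add_sub_cancel_left] at hdist
      have hn : (0:ℝ) < ((n:ℝ)+1) := by positivity
      have : |φ (x + 1/((n:ℝ)+1)) - φ x| ≤ (K:ℝ) * (1/((n:ℝ)+1)) := by
        have : |((n:ℝ)+1)⁻¹| = ((n:ℝ)+1)⁻¹ := abs_of_pos (by positivity)
        simpa [this] using hdist
      have hb : |Fn n x| ≤ ((K:ℝ) * (1/((n:ℝ)+1))) * ((n:ℝ)+1) := by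
        rw [hFn]
        rw [abs_mul, abs_of_pos hn]
        exact mul_le_mul_of_nonneg_right this hn.le
      rw [Real.norm_eq_abs]
      refine hb.trans (le_of_eq ?_)
      field_simp
    · exact ae_restrict_of_ae hmeasd
  -- combine
  have lim1 : Tendsto (fun n => ∫ x in a..b, Fn n x) atTop (nhds (φ b - φ a)) := by
    simp only [stepA]
    exact (stepB b).sub (stepB a)
  have lim2 : Tendsto (fun n => ∫ x in a..b, Fn n x) atTop
      (nhds (∫ x in a..b, deriv φ x)) := by
    have he : ∀ n, ∫ x in a..b, Fn n x = ∫ x in Ioc a b, Fn n x := fun n =>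
      intervalIntegral.integral_of_le hab
    simp only [he, intervalIntegral.integral_of_le hab]
    exact stepC
  exact tendsto_nhds_unique lim1 lim2

lemma abs_exp_sub_exp_le {x y B : ℝ} (hx : x ≤ B) (hy : y ≤ B) :
    |Real.exp x - Real.exp y| ≤ Real.exp B * |x - y| := by
  have key : ∀ u v : ℝ, u ≤ v → v ≤ B → Real.exp v - Real.exp u ≤ Real.exp B * (v - u) := by
    intro u v huv hvB
    have h1 : (u - v) + 1 ≤ Real.exp (u - v) := Real.add_one_le_exp _
    have h2 : Real.exp v - Real.exp u = Real.exp v * (1 - Real.exp (u - v)) := by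
      rw [mul_sub, mul_one, ← Real.exp_add]
      ring_nf
    have h3 : Real.exp v * (1 - Real.exp (u - v)) ≤ Real.exp v * (v - u) := by
      apply mul_le_mul_of_nonneg_left _ (Real.exp_pos v).le
      linarith
    have h4 : Real.exp v * (v - u) ≤ Real.exp B * (v - u) := by
      apply mul_le_mul_of_nonneg_right (Real.exp_le_exp.2 hvB)
      linarith
    linarith
  rcases le_total x y with h | h
  · rw [abs_of_nonpos (by linarith [Real.exp_le_exp.2 h] : Real.exp x - Real.exp y ≤ 0),
      abs_of_nonpos (by linarith : x - y ≤ 0)]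
    have := key x y h hy
    linarith
  · rw [abs_of_nonneg (by linarith [Real.exp_le_exp.2 h] : 0 ≤ Real.exp x - Real.exp y),
      abs_of_nonneg (by linarith : 0 ≤ x - y)]
    have := key y x h hx
    linarith



/-- Positivity of the filter: an absolutely continuous solution (in integral form)
of the inter-jump filtering ODE with strictly positive initial condition stays
strictly positive, with an explicit exponential lower bound. -/
theorem filter_positivity
    (k : ℕ) (t0 t1 : ℝ) (ht : t0 < t1)
    (q A : ℝ → Fin k → Fin k → ℝ)
    (hqmeas : ∀ i j, Measurable fun u => q u i j)
    (hAmeas : ∀ i j, Measurable fun u => A u i j)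
    (C : ℝ)
    (hqbd : ∀ u : ℝ, ∀ i j : Fin k, |q u i j| ≤ C)
    (hAbd : ∀ u : ℝ, ∀ i j : Fin k, |A u i j| ≤ C)
    (hqnn : ∀ u : ℝ, ∀ i j : Fin k, j ≠ i → 0 ≤ q u j i)
    (hAdiag : ∀ u : ℝ, ∀ i : Fin k, A u i i = 0)
    (π : ℝ → Fin k → ℝ)
    (hπmeas : ∀ i, Measurable fun t => π t i)
    (Cπ : ℝ) (hπbd : ∀ t ∈ Set.Ico t0 t1, ∀ j, π t j ≤ Cπ)
    (hπnn : ∀ t ∈ Set.Ico t0 t1, ∀ j, 0 ≤ π t j)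
    (hinit : ∀ i, 0 < π t0 i)
    (heq : ∀ i : Fin k, ∀ t ∈ Set.Ico t0 t1,
      π t i = π t0 i + ∫ u in t0..t, ∑ j, (q u j i * π u j + π u i * π u j * A u j i)) :
    ∀ i : Fin k, ∀ t ∈ Set.Ico t0 t1,
      0 < π t i ∧
      π t0 i * Real.exp (∫ u in t0..t,
          (q u i i + ∑ j ∈ Finset.univ.erase i, π u j * A u j i)) ≤ π t i := by
  intro i b hb
  have hC : 0 ≤ C := (abs_nonneg _).trans (hqbd t0 i i)
  have ht0mem : t0 ∈ Set.Ico t0 t1 := ⟨le_refl _, ht⟩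
  have hCπ : 0 ≤ Cπ := (hπnn t0 ht0mem i).trans (hπbd t0 ht0mem i)
  set c : ℝ := π t0 i with hcdef
  have hc : 0 < c := hinit i
  set S : Set ℝ := Set.Ioc t0 b with hSdef
  have hSsub : ∀ u ∈ S, u ∈ Set.Ico t0 t1 := fun u hu => ⟨hu.1.le, lt_of_le_of_lt hu.2 hb.2⟩
  classical
  set H : ℝ → ℝ := fun u => if u ∈ S then
    ∑ j, (q u j i * π u j + π u i * π u j * A u j i) else 0 with hHdef
  set g : ℝ → ℝ := fun u => if u ∈ S then
    q u i i + ∑ j ∈ Finset.univ.erase i, π u j * A u j i else 0 with hgdef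
  set r : ℝ → ℝ := fun u => if u ∈ S then
    ∑ j ∈ Finset.univ.erase i, q u j i * π u j else 0 with hrdef
  have hHmeas : Measurable H := by
    refine Measurable.ite measurableSet_Ioc ?_ measurable_const
    exact Finset.measurable_sum _ fun j _ =>
      ((hqmeas j i).mul (hπmeas j)).add (((hπmeas i).mul (hπmeas j)).mul (hAmeas j i))
  have hgmeas : Measurable g := by
    refine Measurable.ite measurableSet_Ioc ?_ measurable_const
    exact (hqmeas i i).add (Finset.measurable_sum _ fun j _ => (hπmeas j).mul (hAmeas j i))
  have hrmeas : Measurable r := by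
    refine Measurable.ite measurableSet_Ioc ?_ measurable_const
    exact Finset.measurable_sum _ fun j _ => (hqmeas j i).mul (hπmeas j)
  have hπabs : ∀ u ∈ S, ∀ j, |π u j| ≤ Cπ := fun u hu j => by
    rw [abs_of_nonneg (hπnn u (hSsub u hu) j)]; exact hπbd u (hSsub u hu) j
  set M1 : ℝ := k * (C * Cπ + Cπ * Cπ * C) with hM1def
  have hM1 : ∀ u, |H u| ≤ M1 := by
    intro u
    simp only [hHdef]
    by_cases hu : u ∈ S
    · rw [if_pos hu]
      calc |∑ j, (q u j i * π u j + π u i * π u j * A u j i)|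
          ≤ ∑ j, |q u j i * π u j + π u i * π u j * A u j i| :=
            Finset.abs_sum_le_sum_abs _ _
        _ ≤ ∑ _j : Fin k, (C * Cπ + Cπ * Cπ * C) := by
            refine Finset.sum_le_sum fun j _ => (abs_add_le _ _).trans (add_le_add ?_ ?_)
            · rw [abs_mul]
              exact mul_le_mul (hqbd u j i) (hπabs u hu j) (abs_nonneg _) hC
            · rw [abs_mul, abs_mul]
              exact mul_le_mul (mul_le_mul (hπabs u hu i) (hπabs u hu j) (abs_nonneg _) hCπ)
                (hAbd u j i) (abs_nonneg _) (by positivity)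
        _ = M1 := by
            rw [Finset.sum_const, Finset.card_univ, Fintype.card_fin, nsmul_eq_mul]
    · rw [if_neg hu]
      simp only [abs_zero]
      positivity
  set M2 : ℝ := C + k * (Cπ * C) with hM2def
  have hM2 : ∀ u, |g u| ≤ M2 := by
    intro u
    simp only [hgdef]
    by_cases hu : u ∈ S
    · rw [if_pos hu]
      refine (abs_add_le _ _).trans (add_le_add (hqbd u i i) ?_)
      calc |∑ j ∈ Finset.univ.erase i, π u j * A u j i|
          ≤ ∑ j ∈ Finset.univ.erase i, |π u j * A u j i| := Finset.abs_sum_le_sum_abs _ _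
        _ ≤ ∑ _j ∈ Finset.univ.erase i, (Cπ * C) := by
            refine Finset.sum_le_sum fun j _ => ?_
            rw [abs_mul]
            exact mul_le_mul (hπabs u hu j) (hAbd u j i) (abs_nonneg _) hCπ
        _ ≤ ∑ _j : Fin k, (Cπ * C) := by
            refine Finset.sum_le_sum_of_subset_of_nonneg (Finset.subset_univ _) ?_
            intro j _ _; positivity
        _ = k * (Cπ * C) := by
            rw [Finset.sum_const, Finset.card_univ, Fintype.card_fin, nsmul_eq_mul]
    · rw [if_neg hu]
      simp only [abs_zero]
      positivity
  have hM1nn : 0 ≤ M1 := (abs_nonneg _).trans (hM1 t0)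
  have hM2nn : 0 ≤ M2 := (abs_nonneg _).trans (hM2 t0)
  have hintH : ∀ p p' : ℝ, IntervalIntegrable H volume p p' :=
    bdd_meas_intervalIntegrable hHmeas hM1
  have hintg : ∀ p p' : ℝ, IntervalIntegrable g volume p p' :=
    bdd_meas_intervalIntegrable hgmeas hM2
  set F : ℝ → ℝ := fun t => c + ∫ u in t0..t, H u with hFdef
  set G : ℝ → ℝ := fun t => ∫ u in t0..t, g u with hGdef
  set E : ℝ → ℝ := fun t => Real.exp (-G t) with hEdef
  -- F agrees with π on [t0, b]
  have hFeq : ∀ t ∈ Set.Icc t0 b, F t = π t i := by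
    intro t htt
    have htmem : t ∈ Set.Ico t0 t1 := ⟨htt.1, lt_of_le_of_lt htt.2 hb.2⟩
    simp only [hFdef]
    rw [heq i t htmem]
    congr 1
    rw [intervalIntegral.integral_of_le htt.1, intervalIntegral.integral_of_le htt.1]
    refine MeasureTheory.setIntegral_congr_fun measurableSet_Ioc fun u hu => ?_
    exact if_pos ⟨hu.1, hu.2.trans htt.2⟩
  -- G b equals the target integral
  have hGeq : G b = ∫ u in t0..b,
      (q u i i + ∑ j ∈ Finset.univ.erase i, π u j * A u j i) := by
    simp only [hGdef]
    rw [intervalIntegral.integral_of_le hb.1, intervalIntegral.integral_of_le hb.1]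
    refine MeasureTheory.setIntegral_congr_fun measurableSet_Ioc fun u hu => ?_
    exact if_pos hu
  -- Lipschitz estimates
  have hdistF : ∀ s t : ℝ, dist (F s) (F t) ≤ M1 * dist s t := by
    intro s t
    have hsub : F s - F t = ∫ u in t..s, H u := by
      simp only [hFdef]
      simp only [add_sub_add_left_eq_sub]
      exact intervalIntegral.integral_interval_sub_left (hintH t0 s) (hintH t0 t)
    rw [Real.dist_eq, Real.dist_eq, hsub]
    have := intervalIntegral.norm_integral_le_of_norm_le_const
      (f := H) (a := t) (b := s) (C := M1) (fun x _ => hM1 x)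
    simpa [Real.norm_eq_abs, abs_sub_comm s t] using this
  have hdistG : ∀ s t : ℝ, dist (G s) (G t) ≤ M2 * dist s t := by
    intro s t
    have hsub : G s - G t = ∫ u in t..s, g u := by
      simp only [hGdef]
      exact intervalIntegral.integral_interval_sub_left (hintg t0 s) (hintg t0 t)
    rw [Real.dist_eq, Real.dist_eq, hsub]
    have := intervalIntegral.norm_integral_le_of_norm_le_const
      (f := g) (a := t) (b := s) (C := M2) (fun x _ => hM2 x)
    simpa [Real.norm_eq_abs, abs_sub_comm s t] using this
  -- G vanishes left of t0 and is constant right of b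
  have hnotS_left : ∀ p : ℝ, p ≤ t0 → ∀ u ∈ Set.Ioc p t0, u ∉ S := by
    intro p _ u hu hus
    exact absurd hus.1 (not_lt.2 hu.2)
  have hnotS_right : ∀ p : ℝ, b ≤ p → ∀ u ∈ Set.Ioc b p, u ∉ S := by
    intro p _ u hu hus
    exact absurd hus.2 (not_le.2 hu.1)
  have hzero_int : ∀ (f : ℝ → ℝ) (p p' : ℝ), p ≤ p' → (∀ u ∈ Set.Ioc p p', f u = 0) →
      (∫ u in p..p', f u) = 0 := by
    intro f p p' hpp hzero
    rw [intervalIntegral.integral_of_le hpp,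
      MeasureTheory.setIntegral_congr_fun measurableSet_Ioc
        (fun u hu => hzero u hu : Set.EqOn f (fun _ => (0:ℝ)) (Set.Ioc p p'))]
    simp
  have hG0 : ∀ t : ℝ, t ≤ t0 → G t = 0 := by
    intro t htle
    simp only [hGdef]
    rw [intervalIntegral.integral_symm]
    rw [hzero_int g t t0 htle fun u hu => if_neg (hnotS_left t htle u hu)]
    simp
  have hGright : ∀ t : ℝ, b ≤ t → G t = G b := by
    intro t hbt
    have hsub : G t - G b = ∫ u in b..t, g u := by
      simp only [hGdef]
      exact intervalIntegral.integral_interval_sub_left (hintg t0 t) (hintg t0 b)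
    have : (∫ u in b..t, g u) = 0 :=
      hzero_int g b t hbt fun u hu => if_neg (hnotS_right t hbt u hu)
    linarith [hsub, this]
  have hGt0 : G t0 = 0 := by simp only [hGdef]; exact intervalIntegral.integral_same
  set Gbd : ℝ := M2 * (b - t0) with hGbddef
  have hGbdnn : 0 ≤ Gbd := mul_nonneg hM2nn (by linarith [hb.1])
  have hGIcc : ∀ t ∈ Set.Icc t0 b, |G t| ≤ Gbd := by
    intro t htt
    have := hdistG t t0
    rw [Real.dist_eq, Real.dist_eq, hGt0, sub_zero] at this
    refine this.trans ?_
    rw [hGbddef]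
    have : |t - t0| ≤ b - t0 := by
      rw [abs_of_nonneg (by linarith [htt.1])]
      linarith [htt.2]
    nlinarith
  have hGbd : ∀ t : ℝ, |G t| ≤ Gbd := by
    intro t
    rcases le_total t t0 with h | h
    · rw [hG0 t h]; simpa using hGbdnn
    rcases le_total t b with h' | h'
    · exact hGIcc t ⟨h, h'⟩
    · rw [hGright t h']
      exact hGIcc b ⟨hb.1, le_refl b⟩
  -- boundedness of F
  have hF0 : ∀ t : ℝ, t ≤ t0 → F t = c := by
    intro t htle
    simp only [hFdef]
    rw [intervalIntegral.integral_symm]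
    rw [hzero_int H t t0 htle fun u hu => if_neg (hnotS_left t htle u hu)]
    simp
  have hFright : ∀ t : ℝ, b ≤ t → F t = F b := by
    intro t hbt
    have hsub : F t - F b = ∫ u in b..t, H u := by
      simp only [hFdef]
      simp only [add_sub_add_left_eq_sub]
      exact intervalIntegral.integral_interval_sub_left (hintH t0 t) (hintH t0 b)
    have : (∫ u in b..t, H u) = 0 :=
      hzero_int H b t hbt fun u hu => if_neg (hnotS_right t hbt u hu)
    linarith [hsub, this]
  have hFt0 : F t0 = c := by
    simp only [hFdef]; simp [intervalIntegral.integral_same]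
  set Fbd : ℝ := |c| + M1 * (b - t0) with hFbddef
  have hFbdnn : 0 ≤ Fbd := by
    have : (0:ℝ) ≤ M1 * (b - t0) := mul_nonneg hM1nn (by linarith [hb.1])
    have := abs_nonneg c
    rw [hFbddef]; linarith
  have hFIcc : ∀ t ∈ Set.Icc t0 b, |F t| ≤ Fbd := by
    intro t htt
    have h1 := hdistF t t0
    rw [Real.dist_eq, Real.dist_eq, hFt0] at h1
    have h2 : |t - t0| ≤ b - t0 := by
      rw [abs_of_nonneg (by linarith [htt.1])]
      linarith [htt.2]
    have h3 : |F t| ≤ |F t - c| + |c| := by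
      have := abs_add_le (F t - c) c
      simpa using this
    rw [hFbddef]
    nlinarith
  have hFbd : ∀ t : ℝ, |F t| ≤ Fbd := by
    intro t
    rcases le_total t t0 with h | h
    · rw [hF0 t h, hFbddef]
      have : (0:ℝ) ≤ M1 * (b - t0) := mul_nonneg hM1nn (by linarith [hb.1])
      linarith
    rcases le_total t b with h' | h'
    · exact hFIcc t ⟨h, h'⟩
    · rw [hFright t h']
      exact hFIcc b ⟨hb.1, le_refl b⟩
  -- bounds and Lipschitz property for E
  have hEpos : ∀ t, 0 < E t := fun t => Real.exp_pos _
  have hEbd : ∀ t, E t ≤ Real.exp Gbd := by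
    intro t
    simp only [hEdef]
    apply Real.exp_le_exp.2
    have := hGbd t
    rw [abs_le] at this
    linarith [this.1]
  have hdistE : ∀ s t : ℝ, dist (E s) (E t) ≤ (Real.exp Gbd * M2) * dist s t := by
    intro s t
    have h1 : |(-G s) - (-G t)| = dist (G s) (G t) := by
      rw [Real.dist_eq]
      rw [abs_sub_comm]
      congr 1
      ring
    have hs' : -G s ≤ Gbd := by have := hGbd s; rw [abs_le] at this; linarith [this.1]
    have ht' : -G t ≤ Gbd := by have := hGbd t; rw [abs_le] at this; linarith [this.1]
    calc dist (E s) (E t) = |Real.exp (-G s) - Real.exp (-G t)| := by rw [Real.dist_eq]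
      _ ≤ Real.exp Gbd * |(-G s) - (-G t)| := abs_exp_sub_exp_le hs' ht'
      _ = Real.exp Gbd * dist (G s) (G t) := by rw [h1]
      _ ≤ Real.exp Gbd * (M2 * dist s t) :=
          mul_le_mul_of_nonneg_left (hdistG s t) (Real.exp_pos _).le
      _ = (Real.exp Gbd * M2) * dist s t := by ring
  -- φ and its Lipschitz constant
  set φ : ℝ → ℝ := fun t => F t * E t with hφdef
  set Kφ : ℝ := Fbd * (Real.exp Gbd * M2) + Real.exp Gbd * M1 with hKφdef
  have hKφnn : 0 ≤ Kφ := by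
    rw [hKφdef]
    have := Real.exp_pos Gbd
    positivity
  have hφlip : LipschitzWith Kφ.toNNReal φ := by
    apply LipschitzWith.of_dist_le_mul
    intro s t
    rw [Real.coe_toNNReal _ hKφnn]
    have hdec : φ s - φ t = F s * (E s - E t) + E t * (F s - F t) := by
      simp only [hφdef]; ring
    calc dist (φ s) (φ t) = |φ s - φ t| := Real.dist_eq _ _
      _ ≤ |F s * (E s - E t)| + |E t * (F s - F t)| := by
          rw [hdec]; exact abs_add_le _ _
      _ = |F s| * |E s - E t| + |E t| * |F s - F t| := by rw [abs_mul, abs_mul]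
      _ ≤ Fbd * ((Real.exp Gbd * M2) * dist s t) + Real.exp Gbd * (M1 * dist s t) := by
          apply add_le_add
          · apply mul_le_mul (hFbd s) ?_ (abs_nonneg _) hFbdnn
            rw [← Real.dist_eq]; exact hdistE s t
          · apply mul_le_mul ?_ ?_ (abs_nonneg _) (Real.exp_pos _).le
            · rw [abs_of_pos (hEpos t)]; exact hEbd t
            · rw [← Real.dist_eq]; exact hdistF s t
      _ = Kφ * dist s t := by rw [hKφdef]; ring
  -- key algebraic identity H = g * F + r
  have hHgr : ∀ x : ℝ, H x = g x * F x + r x := by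
    intro x
    by_cases hx : x ∈ S
    · have hxIcc : x ∈ Set.Icc t0 b := ⟨hx.1.le, hx.2⟩
      simp only [hHdef, hgdef, hrdef]
      simp only [if_pos hx]
      rw [hFeq x hxIcc]
      have e1 : ∑ j, q x j i * π x j
          = (∑ j ∈ Finset.univ.erase i, q x j i * π x j) + q x i i * π x i :=
        (Finset.sum_erase_add _ _ (Finset.mem_univ i)).symm
      have e2 : ∑ j, π x i * π x j * A x j i
          = π x i * ∑ j ∈ Finset.univ.erase i, π x j * A x j i := by
        rw [← Finset.sum_erase (f := fun j => π x i * π x j * A x j i) (a := i) Finset.univ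
          (by simp [hAdiag x i])]
        rw [Finset.mul_sum]
        exact Finset.sum_congr rfl fun j _ => mul_assoc _ _ _
      rw [Finset.sum_add_distrib, e1, e2]
      ring
    · simp only [hHdef, hgdef, hrdef]
      simp only [if_neg hx]
      ring
  have hrnn : ∀ x : ℝ, 0 ≤ r x := by
    intro x
    simp only [hrdef]
    by_cases hx : x ∈ S
    · rw [if_pos hx]
      refine Finset.sum_nonneg fun j hj => ?_
      exact mul_nonneg (hqnn x i j (Finset.ne_of_mem_erase hj)) (hπnn x (hSsub x hx) j)
    · rw [if_neg hx]
  -- a.e. derivative of φ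
  have hderivφ : ∀ᵐ x : ℝ, deriv φ x = r x * E x := by
    filter_upwards [ae_hasDerivAt_integral hHmeas hM1 t0,
      ae_hasDerivAt_integral hgmeas hM2 t0] with x hHx hgx
    have hF' : HasDerivAt F (H x) x := hHx.const_add c
    have hG' : HasDerivAt G (g x) x := hgx
    have hE' : HasDerivAt E (Real.exp (-G x) * -(g x)) x := hG'.neg.exp
    have hφ' : HasDerivAt φ (H x * E x + F x * (Real.exp (-G x) * -(g x))) x := hF'.mul hE'
    rw [hφ'.deriv, hHgr x]
    simp only [hEdef]
    ring
  -- conclusion via the Lipschitz FTC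
  have hftc := lipschitz_ftc hφlip t0 b hb.1
  have hnn : 0 ≤ ∫ x in t0..b, deriv φ x := by
    rw [intervalIntegral.integral_of_le hb.1]
    apply MeasureTheory.integral_nonneg_of_ae
    refine MeasureTheory.ae_restrict_of_ae ?_
    filter_upwards [hderivφ] with x hx
    rw [hx]
    exact mul_nonneg (hrnn x) (hEpos x).le
  have hφt0 : φ t0 = c := by
    simp only [hφdef, hEdef]
    rw [hFt0, hGt0]
    simp
  have hφb : c ≤ φ b := by linarith [hftc, hnn, hφt0]
  have hFb : c * Real.exp (G b) ≤ F b := by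
    have h := mul_le_mul_of_nonneg_right hφb (Real.exp_pos (G b)).le
    simp only [hφdef] at h
    calc c * Real.exp (G b) ≤ F b * E b * Real.exp (G b) := h
      _ = F b * (Real.exp (-G b) * Real.exp (G b)) := by simp only [hEdef]; ring
      _ = F b := by rw [← Real.exp_add]; simp
  rw [hFeq b ⟨hb.1, le_refl b⟩] at hFb
  rw [hGeq] at hFb
  refine ⟨lt_of_lt_of_le ?_ hFb, hFb⟩
  positivity
end

section
/- Strictly concave costs force impulses into the continuation region: let V : ℝ → ℝ, 𝒵(x) = [0,∞), cost c : ℝ × [0,∞) → (0,∞) satisfying c(x, δ + δ̄) < c(x,δ) + c(x+δ, δ̄) for all x ∈ ℝ and δ, δ̄ ≥ 0. Suppose for every x in the intervention region ℐ* := {x : ℳV(x) = V(x)} there is a unique maximizer δ*(x) > 0 of δ ↦ V(x+δ) − c(x,δ), where ℳV(x) := sup_{δ≥0}{V(x+δ) − c(x,δ)} ≤ V(x) on ℝ. Then for every x ∈ ℐ*, the post-impulse state x + δ*(x) lies in the continuation region (ℐ*)^c. -/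
/-- Strictly concave (subadditive) costs force impulses into the continuation
region: if `c(x, δ+δ̄) < c(x,δ) + c(x+δ, δ̄)` for `δ, δ̄ ≥ 0`, `ℳV ≤ V`, and on the
intervention region `ℐ* = {ℳV = V}` the supremum is attained at a unique
`δ*(x) > 0`, then for every `x ∈ ℐ*` the post-impulse state `x + δ*(x)` lies in
the continuation region. -/
theorem concave_costs_shift_to_continuation
    (V : ℝ → ℝ) (c : ℝ → ℝ → ℝ)
    (hcpos : ∀ x δ, 0 ≤ δ → 0 < c x δ)
    (hconc : ∀ x δ δ', 0 ≤ δ → 0 ≤ δ' → c x (δ + δ') < c x δ + c (x + δ) δ')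
    (MV : ℝ → ℝ)
    (hMV : ∀ x, MV x = sSup ((fun δ => V (x + δ) - c x δ) '' Set.Ici 0))
    (hle : ∀ x, MV x ≤ V x)
    (δstar : ℝ → ℝ)
    (hδpos : ∀ x, MV x = V x → 0 < δstar x)
    (hmax : ∀ x, MV x = V x →
      IsGreatest ((fun δ => V (x + δ) - c x δ) '' Set.Ici 0)
        (V (x + δstar x) - c x (δstar x)))
    (huniq : ∀ x, MV x = V x → ∀ δ, 0 ≤ δ → V (x + δ) - c x δ = MV x → δ = δstar x) :
    ∀ x, MV x = V x → ¬ MV (x + δstar x) = V (x + δstar x) := by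
  intro x hx hy
  have hdx : 0 < δstar x := hδpos x hx
  have hdy : 0 < δstar (x + δstar x) := hδpos _ hy
  have hgx := hmax x hx
  have hgy := hmax (x + δstar x) hy
  have hMVx : MV x = V (x + δstar x) - c x (δstar x) := by
    rw [hMV x]; exact hgx.csSup_eq
  have hMVy : MV (x + δstar x) =
      V (x + δstar x + δstar (x + δstar x)) - c (x + δstar x) (δstar (x + δstar x)) := by
    rw [hMV (x + δstar x)]; exact hgy.csSup_eq
  have hmem : (V (x + (δstar x + δstar (x + δstar x)))
      - c x (δstar x + δstar (x + δstar x))) ∈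
      ((fun δ => V (x + δ) - c x δ) '' Set.Ici 0) :=
    ⟨δstar x + δstar (x + δstar x), Set.mem_Ici.2 (by linarith), rfl⟩
  have hub := hgx.2 hmem
  have harr : x + (δstar x + δstar (x + δstar x)) = x + δstar x + δstar (x + δstar x) := by
    ring
  rw [harr] at hub
  have hconc' := hconc x (δstar x) (δstar (x + δstar x)) hdx.le hdy.le
  linarith [hub, hconc', hMVx, hMVy, hx, hy]
end
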